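/- The NSE admits the decomposition NSE = 2αr - α² - β², where α = σ_s/σ_o is the ratio of simulated to observed standard deviations, r is the Pearson correlation between simulation and observation, and β = (μ_s - μ_o)/σ_o is the normalized mean bias. -/

import Mathlib

open Finset

/-- Gupta et al. (2009) decomposition: `NSE = 2αr - α² - β²`. -/
theorem nse_decomposition (N : ℕ) (hN : 2 ≤ N) (Q Qo : Fin N → ℝ)
    (μs μo σs σo r α β NSE : ℝ)
    (hμs : μs = (∑ t, Q t) / N) (hμo : μo = (∑ t, Qo t) / N)
    (hσs : σs = Real.sqrt ((∑ t, (Q t - μs) ^ 2) / N))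
    (hσo : σo = Real.sqrt ((∑ t, (Qo t - μo) ^ 2) / N))
    (hσspos : 0 < σs) (hσopos : 0 < σo)
    (hr : r = ((∑ t, (Q t - μs) * (Qo t - μo)) / N) / (σs * σo))
    (hα : α = σs / σo) (hβ : β = (μs - μo) / σo)
    (hNSE : NSE = 1 - (∑ t, (Q t - Qo t) ^ 2) / (∑ t, (Qo t - μo) ^ 2)) :
    NSE = 2 * α * r - α ^ 2 - β ^ 2 := by
  have hN0 : (N : ℝ) ≠ 0 := by
    have : (0:ℝ) < N := by exact_mod_cast lt_of_lt_of_le (by norm_num) hN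
    exact ne_of_gt this
  set S2s := ∑ t, (Q t - μs) ^ 2 with hS2s
  set S2o := ∑ t, (Qo t - μo) ^ 2 with hS2o
  set C := ∑ t, (Q t - μs) * (Qo t - μo) with hC
  have hσs2 : σs ^ 2 = S2s / N := by
    rw [hσs, Real.sq_sqrt]
    positivity
  have hσo2 : σo ^ 2 = S2o / N := by
    rw [hσo, Real.sq_sqrt]
    positivity
  have hsum_s : ∑ t, (Q t - μs) = 0 := by
    simp [Finset.sum_sub_distrib, hμs]
    field_simp
    ring
  have hsum_o : ∑ t, (Qo t - μo) = 0 := by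
    simp [Finset.sum_sub_distrib, hμo]
    field_simp
    ring
  have hexp : ∑ t, (Q t - Qo t) ^ 2
      = S2s + S2o + N * (μs - μo) ^ 2 - 2 * C
        + 2 * (μs - μo) * (∑ t, (Q t - μs))
        - 2 * (μs - μo) * (∑ t, (Qo t - μo)) := by
    rw [hS2s, hS2o, hC, ← Finset.sum_add_distrib, Finset.mul_sum, Finset.mul_sum,
      Finset.mul_sum]
    rw [show ((N:ℝ) * (μs - μo) ^ 2) = ∑ _t : Fin N, (μs - μo) ^ 2 by
      simp [Finset.sum_const, Finset.card_fin, mul_comm]]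
    rw [← Finset.sum_add_distrib, ← Finset.sum_sub_distrib, ← Finset.sum_add_distrib,
      ← Finset.sum_sub_distrib]
    exact Finset.sum_congr rfl fun t _ => by ring
  rw [hsum_s, hsum_o] at hexp
  have hNpos : (0:ℝ) < N := lt_of_le_of_ne (by positivity) (Ne.symm hN0)
  have hS2s' : S2s = σs ^ 2 * N := by
    field_simp at hσs2; linarith
  have hS2o' : S2o = σo ^ 2 * N := by
    field_simp at hσo2; linarith
  have hσs0 : σs ≠ 0 := ne_of_gt hσspos
  have hσo0 : σo ≠ 0 := ne_of_gt hσopos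
  rw [hNSE, hexp, hS2s', hS2o', hα, hr, hβ]
  field_simp
  ring
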